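/- arXiv:2205.05850 — 2 statements merged into one kernel-verified Lean document; each statement's English description precedes it below -/
import Mathlib

section
/- If F_U is 2π/2^{b1}-symmetric, then the outputs Y1 and Y2 are independent: p(y1,y2; F_U) = (1/2^{b1}) · p(y2; F_U) for all y1, y2. -/
open MeasureTheory Real ENNReal

noncomputable def rot (φ : ℝ) : ℂ → ℂ := fun u => u * Complex.exp (φ * Complex.I)

/-- if `F` is `2π/2^{b1}`-symmetric, the outputs `Y1` and `Y2` are
independent: `p(y1,y2;F) = (1/2^{b1}) · p(y2;F)`, where
`p(y2;F) = Σ_{y1} ∫ W_{y1,y2}(u) dF(u)`. -/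
theorem outputs_independent (b1 b2 : ℕ) (hb1 : 0 < b1) (hb2 : 0 < b2)
    (W : ℂ → ZMod (2 ^ b1) → Fin (2 ^ b2) → ℝ)
    (hWmeas : ∀ y1 y2, Measurable (fun u => W u y1 y2))
    (hWnn : ∀ u y1 y2, 0 ≤ W u y1 y2)
    (hWsum : ∀ u, (∑ y1 : ZMod (2 ^ b1), ∑ y2 : Fin (2 ^ b2), W u y1 y2) = 1)
    (hWshift : ∀ (u : ℂ) (k : ℤ) (y1 : ZMod (2 ^ b1)) (y2 : Fin (2 ^ b2)),
      W (rot (2 * π * k / 2 ^ b1) u) y1 y2 = W u (y1 - (k : ZMod (2 ^ b1))) y2)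
    (F : Measure ℂ) [IsProbabilityMeasure F]
    (hFsym : Measure.map (rot (2 * π / 2 ^ b1)) F = F)
    (hWint : ∀ y1 y2, Integrable (fun u => W u y1 y2) F) :
    ∀ (y1 : ZMod (2 ^ b1)) (y2 : Fin (2 ^ b2)),
      (∫ u, W u y1 y2 ∂F)
        = (1 / 2 ^ b1) * ∑ y1' : ZMod (2 ^ b1), ∫ u, W u y1' y2 ∂F := by
  intro y1 y2
  -- the integral as a function of y1
  set I : ZMod (2 ^ b1) → ℝ := fun z => ∫ u, W u z y2 ∂F with hI
  have hrotmeas : Measurable (rot (2 * π / 2 ^ b1)) := by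
    unfold rot; exact (measurable_id.mul_const _)
  -- invariance step: I (z - 1) = I z
  have hstep : ∀ z : ZMod (2 ^ b1), I (z - 1) = I z := by
    intro z
    have h1 : ∀ u : ℂ, W u (z - 1) y2 = W (rot (2 * π / 2 ^ b1) u) z y2 := by
      intro u
      have := hWshift u 1 z y2
      simpa using this.symm
    calc I (z - 1) = ∫ u, W (rot (2 * π / 2 ^ b1) u) z y2 ∂F := by
          simp only [hI]; exact integral_congr_ae (Filter.Eventually.of_forall h1)
      _ = ∫ u, W u z y2 ∂(Measure.map (rot (2 * π / 2 ^ b1)) F) := by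
          rw [integral_map hrotmeas.aemeasurable]
          exact ((hWmeas z y2).stronglyMeasurable).aestronglyMeasurable
      _ = I z := by rw [hFsym]
  -- hence I is constant
  have hshift' : ∀ z : ZMod (2 ^ b1), I (z + 1) = I z := by
    intro z; have := hstep (z + 1); simpa using this.symm
  have hconst : ∀ z : ZMod (2 ^ b1), I z = I 0 := by
    have hnat : ∀ m : ℕ, I (m : ZMod (2 ^ b1)) = I 0 := by
      intro m
      induction m with
      | zero => simp
      | succ n ih => push_cast; rw [hshift']; exact ih
    intro z
    have : z = ((z.val : ℕ) : ZMod (2 ^ b1)) := (ZMod.natCast_zmod_val z).symm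
    rw [this, hnat]
  have hcard : (Finset.univ : Finset (ZMod (2 ^ b1))).card = 2 ^ b1 := by
    simp [ZMod.card]
  have hsum : ∑ y1' : ZMod (2 ^ b1), I y1' = (2 ^ b1 : ℝ) * I y1 := by
    rw [Finset.sum_congr rfl (fun z _ => (hconst z).trans (hconst y1).symm)]
    rw [Finset.sum_const, hcard]
    push_cast; ring
  show I y1 = (1 / 2 ^ b1) * ∑ y1' : ZMod (2 ^ b1), I y1'
  rw [hsum]
  have : (2 : ℝ) ^ b1 ≠ 0 := by positivity
  field_simp
end

section
/- The weak (Gateaux) derivative of the mutual information at F⁰ in the direction F equals ∫ d(u;F⁰) dF(u) − ∫ d(u;F⁰) dF⁰(u), where d(u;F) = Σ_y W_y(u) log(W_y(u)/p(y;F)) is the divergence function; i.e., lim_{λ→0⁺} [I((1−λ)F⁰+λF) − I(F⁰)]/λ equals that expression, provided all output probabilities p(y;F⁰) are strictly positive. -/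
open MeasureTheory Real ENNReal Filter

/-- The output PMF `p(y;F) = ∫ W_y(u) dF(u)`. -/
noncomputable def outP {Y : Type*} (W : ℂ → Y → ℝ) (F : Measure ℂ) (y : Y) : ℝ :=
  ∫ u, W u y ∂F

/-- The divergence function `d(u;F) = Σ_y W_y(u) log(W_y(u)/p(y;F))`
(with the convention `0 log 0 = 0`, automatic since `Real.log 0 = 0`). -/
noncomputable def dvg {Y : Type*} [Fintype Y] (W : ℂ → Y → ℝ) (F : Measure ℂ) (u : ℂ) : ℝ :=
  ∑ y, W u y * Real.log (W u y / outP W F y)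

/-- Mutual information `I(F) = Σ_y ∫ W_y(u) log(W_y(u)/p(y;F)) dF(u)`. -/
noncomputable def relMI {Y : Type*} [Fintype Y] (W : ℂ → Y → ℝ) (F : Measure ℂ) : ℝ :=
  ∑ y, ∫ u, W u y * Real.log (W u y / outP W F y) ∂F

private lemma abs_mul_log_le_one' {x : ℝ} (h0 : 0 ≤ x) (h1 : x ≤ 1) :
    |x * Real.log x| ≤ 1 := by
  rcases eq_or_lt_of_le h0 with h | h
  · simp [← h]
  · rw [mul_comm]
    exact (Real.abs_log_mul_self_lt x h h1).le

private lemma wlog_div (w p : ℝ) (hw : 0 ≤ w) (hp : 0 < p) :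
    w * Real.log (w / p) = w * Real.log w - w * Real.log p := by
  rcases eq_or_lt_of_le hw with h | h
  · simp [← h]
  · rw [Real.log_div h.ne' hp.ne', mul_sub]

private lemma integrable_wlogw {Y : Type*} [Fintype Y] (W : ℂ → Y → ℝ) (y : Y)
    (hWmeas : ∀ y, Measurable (fun u => W u y))
    (hWnn : ∀ u y, 0 ≤ W u y) (hWsum : ∀ u, ∑ y, W u y = 1)
    (μ : Measure ℂ) [IsFiniteMeasure μ] :
    Integrable (fun u => W u y * Real.log (W u y)) μ := by
  have hle : ∀ u, W u y ≤ 1 := fun u => by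
    calc W u y ≤ ∑ y', W u y' :=
          Finset.single_le_sum (fun i _ => hWnn u i) (Finset.mem_univ y)
      _ = 1 := hWsum u
  have hm : Measurable fun u => W u y * Real.log (W u y) :=
    (hWmeas y).mul (Real.measurable_log.comp (hWmeas y))
  refine (integrable_const (1 : ℝ)).mono' hm.aestronglyMeasurable ?_
  exact ae_of_all _ fun u => by
    rw [Real.norm_eq_abs]
    exact abs_mul_log_le_one' (hWnn u y) (hle u)

private lemma integral_wlog {Y : Type*} [Fintype Y] (W : ℂ → Y → ℝ) (y : Y) (p : ℝ)
    (hp : 0 < p)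
    (hWmeas : ∀ y, Measurable (fun u => W u y))
    (hWnn : ∀ u y, 0 ≤ W u y) (hWsum : ∀ u, ∑ y, W u y = 1)
    (μ : Measure ℂ) [IsFiniteMeasure μ]
    (hWint : Integrable (fun u => W u y) μ) :
    ∫ u, W u y * Real.log (W u y / p) ∂μ
      = (∫ u, W u y * Real.log (W u y) ∂μ) - outP W μ y * Real.log p := by
  have h1 : (fun u => W u y * Real.log (W u y / p))
      = fun u => W u y * Real.log (W u y) - W u y * Real.log p :=
    funext fun u => wlog_div _ _ (hWnn u y) hp
  rw [h1, integral_sub (integrable_wlogw W y hWmeas hWnn hWsum μ)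
    (hWint.mul_const _), integral_mul_const]
  rfl

private lemma sum_outP_eq_one {Y : Type*} [Fintype Y] (W : ℂ → Y → ℝ)
    (hWsum : ∀ u, ∑ y, W u y = 1)
    (μ : Measure ℂ) [IsProbabilityMeasure μ]
    (hWint : ∀ y, Integrable (fun u => W u y) μ) :
    ∑ y, outP W μ y = 1 := by
  unfold outP
  rw [← integral_finset_sum _ (fun y _ => hWint y)]
  simp [hWsum]

private lemma relMI_eq {Y : Type*} [Fintype Y] (W : ℂ → Y → ℝ) (μ : Measure ℂ)
    [IsFiniteMeasure μ]
    (hWmeas : ∀ y, Measurable (fun u => W u y))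
    (hWnn : ∀ u y, 0 ≤ W u y) (hWsum : ∀ u, ∑ y, W u y = 1)
    (hpos : ∀ y, 0 < outP W μ y)
    (hWint : ∀ y, Integrable (fun u => W u y) μ) :
    relMI W μ = (∑ y, ∫ u, W u y * Real.log (W u y) ∂μ)
      - ∑ y, outP W μ y * Real.log (outP W μ y) := by
  unfold relMI
  rw [← Finset.sum_sub_distrib]
  exact Finset.sum_congr rfl fun y _ =>
    integral_wlog W y _ (hpos y) hWmeas hWnn hWsum μ (hWint y)

private lemma integral_dvg {Y : Type*} [Fintype Y] (W : ℂ → Y → ℝ) (F0 μ : Measure ℂ)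
    [IsFiniteMeasure μ]
    (hWmeas : ∀ y, Measurable (fun u => W u y))
    (hWnn : ∀ u y, 0 ≤ W u y) (hWsum : ∀ u, ∑ y, W u y = 1)
    (hpos : ∀ y, 0 < outP W F0 y)
    (hWint : ∀ y, Integrable (fun u => W u y) μ) :
    ∫ u, dvg W F0 u ∂μ = (∑ y, ∫ u, W u y * Real.log (W u y) ∂μ)
      - ∑ y, outP W μ y * Real.log (outP W F0 y) := by
  unfold dvg
  rw [integral_finset_sum _ (fun y _ => by
    have h1 : (fun u => W u y * Real.log (W u y / outP W F0 y))
        = fun u => W u y * Real.log (W u y) - W u y * Real.log (outP W F0 y) :=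
      funext fun u => wlog_div _ _ (hWnn u y) (hpos y)
    rw [h1]
    exact (integrable_wlogw W y hWmeas hWnn hWsum μ).sub ((hWint y).mul_const _)),
    ← Finset.sum_sub_distrib]
  exact Finset.sum_congr rfl fun y _ =>
    integral_wlog W y _ (hpos y) hWmeas hWnn hWsum μ (hWint y)

private lemma integral_mix {f : ℂ → ℝ} {l : ℝ} (hl0 : 0 ≤ l) (hl1 : l ≤ 1)
    (F0 F : Measure ℂ) (h0 : Integrable f F0) (h : Integrable f F) :
    ∫ u, f u ∂(ENNReal.ofReal (1 - l) • F0 + ENNReal.ofReal l • F)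
      = (1 - l) * ∫ u, f u ∂F0 + l * ∫ u, f u ∂F := by
  rw [integral_add_measure (h0.smul_measure ofReal_ne_top) (h.smul_measure ofReal_ne_top),
    integral_smul_measure, integral_smul_measure,
    ENNReal.toReal_ofReal (by linarith), ENNReal.toReal_ofReal hl0]
  simp [smul_eq_mul]

/-- the weak (Gateaux) derivative of mutual information at `F⁰` in
direction `F` is `∫ d(u;F⁰) dF − ∫ d(u;F⁰) dF⁰`, provided `p(y;F⁰) > 0` for all `y`. -/
theorem weak_derivative_MI {Y : Type*} [Fintype Y] (W : ℂ → Y → ℝ)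
    (hWmeas : ∀ y, Measurable (fun u => W u y))
    (hWnn : ∀ u y, 0 ≤ W u y) (hWsum : ∀ u, ∑ y, W u y = 1)
    (F0 F : Measure ℂ) [IsProbabilityMeasure F0] [IsProbabilityMeasure F]
    (hpos : ∀ y, 0 < outP W F0 y)
    (hWint0 : ∀ y, Integrable (fun u => W u y) F0)
    (hWint : ∀ y, Integrable (fun u => W u y) F)
    (hhint0 : Integrable (fun u => -∑ y, W u y * Real.log (W u y)) F0)
    (hhint : Integrable (fun u => -∑ y, W u y * Real.log (W u y)) F) :
    Tendsto
      (fun l : ℝ =>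
        (relMI W (ENNReal.ofReal (1 - l) • F0 + ENNReal.ofReal l • F) - relMI W F0) / l)
      (nhdsWithin 0 (Set.Ioi 0))
      (nhds ((∫ u, dvg W F0 u ∂F) - ∫ u, dvg W F0 u ∂F0)) := by
  classical
  set p0 : Y → ℝ := fun y => outP W F0 y with hp0
  set p : Y → ℝ := fun y => outP W F y with hp
  set B0 : Y → ℝ := fun y => ∫ u, W u y * Real.log (W u y) ∂F0 with hB0
  set B : Y → ℝ := fun y => ∫ u, W u y * Real.log (W u y) ∂F with hB
  set φ : Y → ℝ → ℝ := fun y l => ((1 - l) * p0 y + l * p y) * Real.log ((1 - l) * p0 y + l * p y)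
    with hφ
  have hpnn : ∀ y, 0 ≤ p y := fun y => integral_nonneg (fun u => hWnn u y)
  have hφ0 : ∀ y, φ y 0 = p0 y * Real.log (p0 y) := by
    intro y; simp only [hφ]; norm_num
  -- derivative of each φ y at 0 from the right
  have hslope : ∀ y, Tendsto (fun l => (φ y l - φ y 0) / l) (nhdsWithin 0 (Set.Ioi 0))
      (nhds ((p y - p0 y) * (Real.log (p0 y) + 1))) := by
    intro y
    have hlin : HasDerivAt (fun l : ℝ => (1 - l) * p0 y + l * p y) (p y - p0 y) 0 := by
      have h1 : HasDerivAt (fun l : ℝ => (1 - l) * p0 y) ((-1) * p0 y) 0 :=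
        ((hasDerivAt_id (0:ℝ)).const_sub 1).mul_const (p0 y)
      have h2 : HasDerivAt (fun l : ℝ => l * p y) (1 * p y) 0 :=
        (hasDerivAt_id (0:ℝ)).mul_const (p y)
      have := h1.add h2
      exact this.congr_deriv (by ring)
    have houter : HasDerivAt (fun x : ℝ => x * Real.log x) (Real.log (p0 y) + 1)
        ((fun l : ℝ => (1 - l) * p0 y + l * p y) 0) := by
      have hx : ((fun l : ℝ => (1 - l) * p0 y + l * p y) 0) = p0 y := by norm_num
      rw [hx]
      exact Real.hasDerivAt_mul_log (hpos y).ne'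
    have hderiv : HasDerivAt (φ y) ((p y - p0 y) * (Real.log (p0 y) + 1)) 0 := by
      have := houter.comp 0 hlin
      exact this.congr_deriv (by ring)
    have h1 := hasDerivAt_iff_tendsto_slope.mp hderiv
    have h2 := h1.mono_left (nhdsWithin_mono (0:ℝ)
      (fun x (hx : x ∈ Set.Ioi (0:ℝ)) => Set.mem_compl_singleton_iff.mpr (ne_of_gt hx)))
    refine h2.congr fun l => ?_
    simp [slope_def_field]
  -- sum of slopes
  have hsum : Tendsto (fun l => ∑ y, (φ y l - φ y 0) / l) (nhdsWithin 0 (Set.Ioi 0))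
      (nhds (∑ y, (p y - p0 y) * (Real.log (p0 y) + 1))) :=
    tendsto_finset_sum _ (fun y _ => hslope y)
  -- the limit function
  have hmain : Tendsto (fun l => ((∑ y, B y) - ∑ y, B0 y) - ∑ y, (φ y l - φ y 0) / l)
      (nhdsWithin 0 (Set.Ioi 0))
      (nhds (((∑ y, B y) - ∑ y, B0 y) - ∑ y, (p y - p0 y) * (Real.log (p0 y) + 1))) :=
    tendsto_const_nhds.sub hsum
  -- identify limit value
  have hs0 : ∑ y, p0 y = 1 := sum_outP_eq_one W hWsum F0 hWint0
  have hs1 : ∑ y, p y = 1 := sum_outP_eq_one W hWsum F hWint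
  have hval : (∫ u, dvg W F0 u ∂F) - ∫ u, dvg W F0 u ∂F0
      = ((∑ y, B y) - ∑ y, B0 y) - ∑ y, (p y - p0 y) * (Real.log (p0 y) + 1) := by
    rw [integral_dvg W F0 F hWmeas hWnn hWsum hpos hWint,
      integral_dvg W F0 F0 hWmeas hWnn hWsum hpos hWint0]
    have hSig : ∑ y, (p y - p0 y) * (Real.log (p0 y) + 1)
        = ((∑ y, p y * Real.log (p0 y)) - ∑ y, p0 y * Real.log (p0 y))
          + ((∑ y, p y) - ∑ y, p0 y) := by
      rw [← Finset.sum_sub_distrib, ← Finset.sum_sub_distrib, ← Finset.sum_add_distrib]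
      exact Finset.sum_congr rfl fun y _ => by ring
    rw [hSig, hs0, hs1]
    simp only [hp0, hp, hB0, hB]
    ring
  rw [hval]
  -- eventual equality of the difference quotient
  refine hmain.congr' ?_
  have hIoo : Set.Ioo (0:ℝ) 1 ∈ nhdsWithin (0:ℝ) (Set.Ioi 0) :=
    Ioo_mem_nhdsGT_of_mem ⟨le_refl 0, zero_lt_one⟩
  filter_upwards [hIoo] with l hl
  obtain ⟨hl0, hl1⟩ := hl
  set μl : Measure ℂ := ENNReal.ofReal (1 - l) • F0 + ENNReal.ofReal l • F with hμl
  haveI : IsFiniteMeasure μl := by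
    constructor
    rw [hμl]
    simp only [Measure.add_apply, Measure.smul_apply, smul_eq_mul]
    exact ENNReal.add_lt_top.mpr ⟨ENNReal.mul_lt_top ofReal_lt_top (measure_lt_top F0 _),
      ENNReal.mul_lt_top ofReal_lt_top (measure_lt_top F _)⟩
  have hWintl : ∀ y, Integrable (fun u => W u y) μl := fun y =>
    ((hWint0 y).smul_measure ofReal_ne_top).add_measure ((hWint y).smul_measure ofReal_ne_top)
  have houtl : ∀ y, outP W μl y = (1 - l) * p0 y + l * p y := fun y =>
    integral_mix hl0.le hl1.le F0 F (hWint0 y) (hWint y)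
  have hposl : ∀ y, 0 < outP W μl y := by
    intro y
    rw [houtl y]
    have h1 : 0 < (1 - l) * p0 y := mul_pos (by linarith) (hpos y)
    have h2 : 0 ≤ l * p y := mul_nonneg hl0.le (hpnn y)
    linarith
  have hBl : ∀ y, ∫ u, W u y * Real.log (W u y) ∂μl = (1 - l) * B0 y + l * B y := fun y =>
    integral_mix hl0.le hl1.le F0 F
      (integrable_wlogw W y hWmeas hWnn hWsum F0)
      (integrable_wlogw W y hWmeas hWnn hWsum F)
  have hrel_l : relMI W μl
      = ((1 - l) * ∑ y, B0 y + l * ∑ y, B y) - ∑ y, φ y l := by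
    rw [relMI_eq W μl hWmeas hWnn hWsum hposl hWintl]
    congr 1
    · rw [Finset.mul_sum, Finset.mul_sum, ← Finset.sum_add_distrib]
      exact Finset.sum_congr rfl fun y _ => hBl y
    · exact Finset.sum_congr rfl fun y _ => by rw [houtl y]
  have hrel_0 : relMI W F0 = (∑ y, B0 y) - ∑ y, φ y 0 := by
    rw [relMI_eq W F0 hWmeas hWnn hWsum hpos hWint0]
    congr 1
    exact Finset.sum_congr rfl fun y _ => (hφ0 y).symm
  show ((∑ y, B y) - ∑ y, B0 y) - ∑ y, (φ y l - φ y 0) / l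
      = (relMI W μl - relMI W F0) / l
  rw [hrel_l, hrel_0]
  have hlne : l ≠ 0 := ne_of_gt hl0
  rw [show (∑ y, (φ y l - φ y 0) / l) = ((∑ y, φ y l) - ∑ y, φ y 0) / l by
    rw [← Finset.sum_sub_distrib, Finset.sum_div]]
  field_simp
  ring
end
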